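/- Substituting μ = μ̄(θ, t*(θ)) and t = t*(θ) = (FᵀF)⁻¹Fᵀ(x_q − R(θ)x_p) into J₁(μ, t, θ) = (1/σ_p²)‖x_p − μ‖² + (1/σ_q²)‖x_q − R(θ)μ − Ft‖² yields J₁(μ*(θ), t*(θ), θ) = (1/(σ_p² + σ_q²))·‖x_q − R(θ)x_p‖²_Q, where ‖z‖²_Q = zᵀQz and Q = I_{2n} − F(FᵀF)⁻¹Fᵀ. -/

import Mathlib

open Matrix Real Kronecker

noncomputable def rot (θ : ℝ) : Matrix (Fin 2) (Fin 2) ℝ :=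
  !![Real.cos θ, -Real.sin θ; Real.sin θ, Real.cos θ]

noncomputable def Fmat (n : ℕ) : Matrix (Fin n × Fin 2) (Fin 1 × Fin 2) ℝ :=
  (Matrix.of fun (_ : Fin n) (_ : Fin 1) => (1 : ℝ)) ⊗ₖ (1 : Matrix (Fin 2) (Fin 2) ℝ)

noncomputable def Qmat (n : ℕ) : Matrix (Fin n × Fin 2) (Fin n × Fin 2) ℝ :=
  1 - Fmat n * ((Fmat n)ᵀ * Fmat n)⁻¹ * (Fmat n)ᵀ

noncomputable def Rblk (m : ℕ) (θ : ℝ) : Matrix (Fin m × Fin 2) (Fin m × Fin 2) ℝ :=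
  (1 : Matrix (Fin m) (Fin m) ℝ) ⊗ₖ rot θ

noncomputable def sqn {ι : Type*} [Fintype ι] (z : ι → ℝ) : ℝ := z ⬝ᵥ z

lemma rot_orth (θ : ℝ) : (rot θ)ᵀ * rot θ = 1 := by
  ext i j
  fin_cases i <;> fin_cases j <;>
    simp [rot, Matrix.mul_apply, Fin.sum_univ_succ, mul_comm] <;> nlinarith [sin_sq_add_cos_sq θ]

lemma Rblk_orth (m : ℕ) (θ : ℝ) : (Rblk m θ)ᵀ * Rblk m θ = 1 := by
  rw [Rblk, ← kroneckerMap_transpose, transpose_one, ← mul_kronecker_mul, one_mul, rot_orth,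
    one_kronecker_one]

lemma Rblk_orth' (m : ℕ) (θ : ℝ) : Rblk m θ * (Rblk m θ)ᵀ = 1 :=
  mul_eq_one_comm.mp (Rblk_orth m θ)

lemma FtF (n : ℕ) : (Fmat n)ᵀ * Fmat n = (n : ℝ) • 1 := by
  rw [Fmat, ← kroneckerMap_transpose, transpose_one, ← mul_kronecker_mul, one_mul]
  have h1 : ((Matrix.of fun (_ : Fin n) (_ : Fin 1) => (1 : ℝ)))ᵀ *
      (Matrix.of fun (_ : Fin n) (_ : Fin 1) => (1 : ℝ)) = (n : ℝ) • 1 := by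
    ext i j
    fin_cases i; fin_cases j
    simp [Matrix.mul_apply]
  rw [h1, smul_kronecker, one_kronecker_one]

lemma FtF_inv (n : ℕ) (hn : 1 ≤ n) : ((Fmat n)ᵀ * Fmat n)⁻¹ = (n : ℝ)⁻¹ • 1 := by
  have hn0 : (n : ℝ) ≠ 0 := by positivity
  apply Matrix.inv_eq_right_inv
  rw [FtF, smul_mul_assoc, mul_smul_comm, one_mul, smul_smul, mul_inv_cancel₀ hn0, one_smul]

lemma FtF_inv_symm (n : ℕ) (hn : 1 ≤ n) : (((Fmat n)ᵀ * Fmat n)⁻¹)ᵀ = ((Fmat n)ᵀ * Fmat n)⁻¹ := by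
  rw [FtF_inv n hn, transpose_smul, transpose_one]

lemma inv_FtF (n : ℕ) (hn : 1 ≤ n) : ((Fmat n)ᵀ * Fmat n)⁻¹ * ((Fmat n)ᵀ * Fmat n) = 1 := by
  have hn0 : (n : ℝ) ≠ 0 := by positivity
  rw [FtF_inv n hn, FtF, smul_mul_assoc, mul_smul_comm, one_mul, smul_smul,
    inv_mul_cancel₀ hn0, one_smul]

lemma FtF_mul_inv (n : ℕ) (hn : 1 ≤ n) : ((Fmat n)ᵀ * Fmat n) * ((Fmat n)ᵀ * Fmat n)⁻¹ = 1 := by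
  have hn0 : (n : ℝ) ≠ 0 := by positivity
  rw [FtF_inv n hn, FtF, smul_mul_assoc, mul_smul_comm, one_mul, smul_smul,
    mul_inv_cancel₀ hn0, one_smul]

lemma Qmat_symm (n : ℕ) (hn : 1 ≤ n) : (Qmat n)ᵀ = Qmat n := by
  rw [Qmat, transpose_sub, transpose_one, transpose_mul, transpose_mul, transpose_transpose,
    FtF_inv_symm n hn, Matrix.mul_assoc]

lemma Qmat_idem (n : ℕ) (hn : 1 ≤ n) : Qmat n * Qmat n = Qmat n := by
  have key : (Fmat n * ((Fmat n)ᵀ * Fmat n)⁻¹ * (Fmat n)ᵀ) *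
      (Fmat n * ((Fmat n)ᵀ * Fmat n)⁻¹ * (Fmat n)ᵀ) =
      Fmat n * ((Fmat n)ᵀ * Fmat n)⁻¹ * (Fmat n)ᵀ := by
    have : (Fmat n)ᵀ * (Fmat n * ((Fmat n)ᵀ * Fmat n)⁻¹) = 1 := by
      rw [← Matrix.mul_assoc, FtF_mul_inv n hn]
    calc Fmat n * ((Fmat n)ᵀ * Fmat n)⁻¹ * (Fmat n)ᵀ *
        (Fmat n * ((Fmat n)ᵀ * Fmat n)⁻¹ * (Fmat n)ᵀ)
        = Fmat n * ((Fmat n)ᵀ * Fmat n)⁻¹ *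
          ((Fmat n)ᵀ * (Fmat n * ((Fmat n)ᵀ * Fmat n)⁻¹)) * (Fmat n)ᵀ := by
          simp only [Matrix.mul_assoc]
      _ = _ := by rw [this, Matrix.mul_one]
  rw [Qmat, sub_mul, Matrix.one_mul, mul_sub, Matrix.mul_one, key]
  abel

theorem J1_concentrated (n : ℕ) (hn : 1 ≤ n) (θ : ℝ) (σp σq : ℝ) (hp : 0 < σp) (hq : 0 < σq)
    (xp xq : Fin n × Fin 2 → ℝ) :
    let tstar : Fin 1 × Fin 2 → ℝ :=
      (((Fmat n)ᵀ * Fmat n)⁻¹ * (Fmat n)ᵀ).mulVec (xq - (Rblk n θ).mulVec xp)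
    let μstar : Fin n × Fin 2 → ℝ :=
      (σp ^ 2 * σq ^ 2 / (σp ^ 2 + σq ^ 2)) •
        ((1 / σp ^ 2) • xp
          + (1 / σq ^ 2) • (Rblk n θ)ᵀ.mulVec (xq - (Fmat n).mulVec tstar))
    (1 / σp ^ 2) * sqn (xp - μstar)
      + (1 / σq ^ 2) * sqn (xq - (Rblk n θ).mulVec μstar - (Fmat n).mulVec tstar)
      = (1 / (σp ^ 2 + σq ^ 2)) *
          ((xq - (Rblk n θ).mulVec xp) ⬝ᵥ (Qmat n).mulVec (xq - (Rblk n θ).mulVec xp)) := by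
  intro tstar μstar
  set a := σp ^ 2 with ha
  set b := σq ^ 2 with hb
  have ha0 : (0:ℝ) < a := by positivity
  have hb0 : (0:ℝ) < b := by positivity
  have hab : (0:ℝ) < a + b := by positivity
  set R := Rblk n θ with hR
  set z : Fin n × Fin 2 → ℝ := xq - R.mulVec xp with hz
  set w : Fin n × Fin 2 → ℝ := (Qmat n).mulVec z with hw
  -- F tstar = z - w
  have hFt : (Fmat n).mulVec tstar = z - w := by
    show (Fmat n).mulVec ((((Fmat n)ᵀ * Fmat n)⁻¹ * (Fmat n)ᵀ).mulVec z) = z - w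
    rw [Matrix.mulVec_mulVec, ← Matrix.mul_assoc, hw, Qmat, Matrix.sub_mulVec,
      Matrix.one_mulVec, sub_sub_cancel]
  -- xq - F tstar = R xp + w
  have hy : xq - (Fmat n).mulVec tstar = R.mulVec xp + w := by
    rw [hFt, hz]; abel
  -- Rᵀ (R xp + w) = xp + Rᵀ w
  have hRt : Rᵀ.mulVec (R.mulVec xp + w) = xp + Rᵀ.mulVec w := by
    rw [Matrix.mulVec_add, Matrix.mulVec_mulVec, hR, Rblk_orth, Matrix.one_mulVec]
  -- μstar expression
  have hμ1 : xp - μstar = (a / (a + b)) • ((-1 : ℝ) • Rᵀ.mulVec w) := by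
    show xp - (a * b / (a + b)) • ((1 / a) • xp + (1 / b) • Rᵀ.mulVec (xq - (Fmat n).mulVec tstar))
      = _
    rw [hy, hRt]
    rw [smul_add, smul_smul, smul_smul, smul_add]
    have e1 : a * b / (a + b) * (1 / a) = b / (a + b) := by field_simp
    have e2 : a * b / (a + b) * (1 / b) = a / (a + b) := by field_simp
    rw [e1, e2]
    ext i
    simp only [Pi.sub_apply, Pi.add_apply, Pi.smul_apply, smul_eq_mul]
    field_simp
    ring
  have hμ2 : xq - R.mulVec μstar - (Fmat n).mulVec tstar = (b / (a + b)) • w := by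
    have hRμ : R.mulVec μstar
        = (b / (a + b)) • R.mulVec xp + (a / (a + b)) • (R.mulVec xp + w) := by
      show R.mulVec ((a * b / (a + b)) •
        ((1 / a) • xp + (1 / b) • Rᵀ.mulVec (xq - (Fmat n).mulVec tstar))) = _
      rw [hy, hRt, Matrix.mulVec_smul, Matrix.mulVec_add, Matrix.mulVec_smul,
        Matrix.mulVec_smul, Matrix.mulVec_add, Matrix.mulVec_mulVec, hR, Rblk_orth',
        Matrix.one_mulVec]
      rw [smul_add, smul_smul, smul_smul]
      have e1 : a * b / (a + b) * (1 / a) = b / (a + b) := by field_simp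
      have e2 : a * b / (a + b) * (1 / b) = a / (a + b) := by field_simp
      rw [e1, e2, smul_add]
    rw [hFt, hRμ, hz]
    match_scalars <;> (field_simp; try ring)
  -- sqn of scalar multiples
  have hsqn_smul : ∀ (c : ℝ) (v : Fin n × Fin 2 → ℝ), sqn (c • v) = c ^ 2 * sqn v := by
    intro c v
    simp [sqn, smul_dotProduct, dotProduct_smul, smul_smul]
    ring
  -- sqn (Rᵀ w) = sqn w
  have hsqnRt : sqn (Rᵀ.mulVec w) = sqn w := by
    rw [sqn, Matrix.dotProduct_mulVec, ← Matrix.mulVec_transpose, Matrix.mulVec_mulVec,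
      transpose_transpose, hR, Rblk_orth', Matrix.one_mulVec, ← sqn]
  -- sqn w = z ⬝ᵥ Q z
  have hsqnw : sqn w = z ⬝ᵥ (Qmat n).mulVec z := by
    rw [sqn, hw, Matrix.dotProduct_mulVec, ← Matrix.mulVec_transpose, Qmat_symm n hn,
      Matrix.mulVec_mulVec, Qmat_idem n hn]
    rw [Matrix.dotProduct_mulVec, ← Matrix.mulVec_transpose, Qmat_symm n hn]
  rw [hμ1, hμ2, hsqn_smul, hsqn_smul, hsqn_smul, hsqnRt, ← hsqnw]
  field_simp
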